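/- Fix k ≥ 1 and m = k+1. Suppose for every deviation function D from k-committees to nonempty deviations of size at most k, there exists a probability distribution q over k-committees such that for all votes A ⊆ C, Pr_{W∼q}[|W ∩ A| < |D(W) ∩ A|] < E_{W∼q}[|D(W)|]/k. Then every vote distribution over 2^C admits a core-stable k-committee. -/
import Mathlib


/-- for `m = k+1`, if for every deviation function `D` there is a
distribution `q` over `k`-committees with
`Pr[|W∩A| < |D(W)∩A|] < E[|D(W)|]/k` for all votes `A`, then every vote
distribution admits a core-stable `k`-committee. -/
theorem stmt9 (k : ℕ) (hk : 1 ≤ k) (m : ℕ) (hm : m = k + 1)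
    (hyp : ∀ D : Finset (Fin m) → Finset (Fin m),
      (∀ Wc : Finset (Fin m), Wc.card = k → (D Wc).Nonempty ∧ (D Wc).card ≤ k) →
      ∃ q : Finset (Fin m) → ℚ,
        (∀ Wc, 0 ≤ q Wc) ∧ (∀ Wc : Finset (Fin m), Wc.card ≠ k → q Wc = 0) ∧
        (∑ Wc : Finset (Fin m), q Wc = 1) ∧
        (∀ A : Finset (Fin m),
          (∑ Wc ∈ Finset.univ.filter
              (fun Wc : Finset (Fin m) => Wc.card = k ∧ (Wc ∩ A).card < (D Wc ∩ A).card),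
            q Wc)
            < (∑ Wc : Finset (Fin m), q Wc * ((D Wc).card : ℚ)) / (k : ℚ))) :
    ∀ x : Finset (Fin m) → ℚ, (∀ A, 0 ≤ x A) → (∑ A : Finset (Fin m), x A = 1) →
      ∃ W : Finset (Fin m), W.card = k ∧
        ∀ W' : Finset (Fin m), W'.Nonempty → W'.card ≤ k →
          (∑ A ∈ Finset.univ.filter
              (fun A : Finset (Fin m) => (A ∩ W).card < (A ∩ W').card), x A)
            < (W'.card : ℚ) / (k : ℚ) := by
  intro x hx hx1
  by_contra hcon
  push_neg at hcon
  have hm0 : 0 < m := by omega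
  -- build a deviation function
  have hD : ∀ W : Finset (Fin m), ∃ W' : Finset (Fin m),
      W'.Nonempty ∧ W'.card ≤ k ∧ (W.card = k →
        (W'.card : ℚ) / (k : ℚ) ≤
          ∑ A ∈ Finset.univ.filter
            (fun A : Finset (Fin m) => (A ∩ W).card < (A ∩ W').card), x A) := by
    intro W
    by_cases hW : W.card = k
    · obtain ⟨W', h1, h2, h3⟩ := hcon W hW
      exact ⟨W', h1, h2, fun _ => h3⟩
    · exact ⟨{⟨0, hm0⟩}, Finset.singleton_nonempty _, by simpa using hk,
        fun h => absurd h hW⟩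
  choose D hD1 hD2 hD3 using hD
  obtain ⟨q, hq0, hqz, hq1, hqlt⟩ := hyp D (fun Wc hWc => ⟨hD1 Wc, hD2 Wc⟩)
  set E : ℚ := ∑ Wc : Finset (Fin m), q Wc * ((D Wc).card : ℚ) with hE
  set T : ℚ := ∑ W : Finset (Fin m), ∑ A : Finset (Fin m),
      (if W.card = k ∧ (W ∩ A).card < (D W ∩ A).card then q W * x A else 0) with hT
  have hlow : E / (k : ℚ) ≤ T := by
    rw [hE, hT, Finset.sum_div]
    apply Finset.sum_le_sum
    intro W _
    by_cases hW : W.card = k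
    · have heq : (∑ A : Finset (Fin m),
          (if W.card = k ∧ (W ∩ A).card < (D W ∩ A).card then q W * x A else 0))
          = q W * ∑ A ∈ Finset.univ.filter
              (fun A : Finset (Fin m) => (A ∩ W).card < (A ∩ D W).card), x A := by
        rw [Finset.mul_sum, Finset.sum_filter]
        apply Finset.sum_congr rfl
        intro A _
        simp [hW, Finset.inter_comm]
      rw [heq]
      calc q W * ((D W).card : ℚ) / (k : ℚ)
          = q W * (((D W).card : ℚ) / (k : ℚ)) := by ring
        _ ≤ _ := mul_le_mul_of_nonneg_left (hD3 W hW) (hq0 W)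
    · simp [hqz W hW, hW]
  have hswap : T = ∑ A : Finset (Fin m), ∑ W : Finset (Fin m),
      (if W.card = k ∧ (W ∩ A).card < (D W ∩ A).card then q W * x A else 0) :=
    Finset.sum_comm
  have hpos : ∃ A : Finset (Fin m), 0 < x A := by
    by_contra h'
    push_neg at h'
    have hz : ∑ A : Finset (Fin m), x A = 0 :=
      Finset.sum_eq_zero (fun A _ => le_antisymm (h' A) (hx A))
    rw [hx1] at hz
    norm_num at hz
  obtain ⟨A0, hA0⟩ := hpos
  have key : ∀ A : Finset (Fin m),
      (∑ W : Finset (Fin m),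
        (if W.card = k ∧ (W ∩ A).card < (D W ∩ A).card then q W * x A else 0))
      = x A * ∑ Wc ∈ Finset.univ.filter
          (fun Wc : Finset (Fin m) => Wc.card = k ∧ (Wc ∩ A).card < (D Wc ∩ A).card),
          q Wc := by
    intro A
    rw [Finset.mul_sum, Finset.sum_filter]
    apply Finset.sum_congr rfl
    intro W _
    split_ifs <;> ring
  have hup : T < E / (k : ℚ) := by
    rw [hswap]
    calc ∑ A : Finset (Fin m), ∑ W : Finset (Fin m),
          (if W.card = k ∧ (W ∩ A).card < (D W ∩ A).card then q W * x A else 0)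
        = ∑ A : Finset (Fin m), x A * ∑ Wc ∈ Finset.univ.filter
            (fun Wc : Finset (Fin m) => Wc.card = k ∧ (Wc ∩ A).card < (D Wc ∩ A).card),
            q Wc := Finset.sum_congr rfl (fun A _ => key A)
      _ < ∑ A : Finset (Fin m), x A * (E / (k : ℚ)) := by
          apply Finset.sum_lt_sum
          · exact fun A _ => mul_le_mul_of_nonneg_left (le_of_lt (hqlt A)) (hx A)
          · exact ⟨A0, Finset.mem_univ _, mul_lt_mul_of_pos_left (hqlt A0) hA0⟩
      _ = E / (k : ℚ) := by rw [← Finset.sum_mul, hx1, one_mul]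
  exact absurd hup (not_lt.mpr hlow)
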